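/- Let N ≥ 2, L > 0, F > 0, and set S(F) = F^{-1/2} · Σ_{k=1}^{N} k^{-1/2}. If S(F) ≤ L, then the unique equilibrium configuration on [-L, 0] for constant force F coincides with that of the auxiliary half-line model: its gaps are δ_k = ((N-k+1)F)^{-1/2}, f_N = F, and x_N = -S(F) > -L when S(F) < L. If S(F) ≥ L, then the equilibrium configuration satisfies x_N = -L. -/

import Mathlib

/-- An equilibrium (fixed-point) configuration of `N+1` charges
`-L ≤ x N < ... < x 1 < x 0 = 0` on `[-L, 0]` under constant external force `F`:
with gaps `δ k = x (k-1) - x k` and `f k = (δ k)⁻²`, the force balance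
`f (k+1) + F = f k` holds for `k = 1, ..., N-1`, and at the left end either
`x N = -L` with `f N ≥ F`, or `x N > -L` with `f N = F`. Such a configuration
exists and is unique. -/
def IsEquilibConst (N : ℕ) (L F : ℝ) (x : ℕ → ℝ) : Prop :=
  x 0 = 0 ∧ (∀ k < N, x (k + 1) < x k) ∧ -L ≤ x N ∧
  (∀ k, 1 ≤ k → k < N →
    ((x k - x (k + 1)) ^ 2)⁻¹ + F = ((x (k - 1) - x k) ^ 2)⁻¹) ∧
  ((x N = -L ∧ F ≤ ((x (N - 1) - x N) ^ 2)⁻¹) ∨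
   (-L < x N ∧ ((x (N - 1) - x N) ^ 2)⁻¹ = F))

/-- Let `S F = F^(-1/2) ∑_{k=1}^N k^(-1/2)`. If `S F ≤ L`,
the equilibrium configuration on `[-L, 0]` coincides with the auxiliary
half-line solution: its gaps are `δ k = ((N-k+1) F)^(-1/2)`, `f N = F`, and
`x N = -S F`, with `x N > -L` when `S F < L`. If `S F ≥ L` then `x N = -L`. -/
theorem comparison_with_halfline_model
    (N : ℕ) (hN : 2 ≤ N) (L F : ℝ) (hL : 0 < L) (hF : 0 < F)
    (x : ℕ → ℝ) (hx : IsEquilibConst N L F x)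
    (S : ℝ) (hS : S = (Real.sqrt F)⁻¹ * ∑ k ∈ Finset.Icc 1 N, (Real.sqrt (k : ℝ))⁻¹) :
    (S ≤ L →
      (∀ k, 1 ≤ k → k ≤ N →
        x (k - 1) - x k = (Real.sqrt (((N : ℝ) - (k : ℝ) + 1) * F))⁻¹) ∧
      ((x (N - 1) - x N) ^ 2)⁻¹ = F ∧
      x N = -S ∧ (S < L → -L < x N)) ∧
    (L ≤ S → x N = -L) := by
  obtain ⟨hx0, hdec, hxL, hbal, halt⟩ := hx
  set c := ((x (N - 1) - x N) ^ 2)⁻¹ with hcdef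
  -- positivity of gaps
  have hδpos : ∀ k, 1 ≤ k → k ≤ N → 0 < x (k - 1) - x k := by
    intro k hk1 hkN
    have h := hdec (k - 1) (by omega)
    rw [Nat.sub_add_cancel hk1] at h
    linarith
  have hc : 0 < c := by
    have := hδpos N (by omega) le_rfl
    rw [hcdef]; positivity
  -- recursion
  have hf : ∀ m : ℕ, ∀ k : ℕ, k + m = N → 1 ≤ k →
      ((x (k - 1) - x k) ^ 2)⁻¹ = c + (m : ℝ) * F := by
    intro m
    induction m with
    | zero =>
      intro k hk _
      have : k = N := by omega
      subst this; simp [hcdef]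
    | succ m ih =>
      intro k hk hk1
      have h1 := hbal k hk1 (by omega)
      have h2 := ih (k + 1) (by omega) (by omega)
      simp only [Nat.add_sub_cancel] at h2
      push_cast
      push_cast at h2
      linarith
  -- gap formula
  have hδ : ∀ k, 1 ≤ k → k ≤ N →
      x (k - 1) - x k = (Real.sqrt (c + ((N - k : ℕ) : ℝ) * F))⁻¹ := by
    intro k hk1 hkN
    have hpos := hδpos k hk1 hkN
    have hfk := hf (N - k) k (by omega) hk1
    have h2 : (x (k - 1) - x k) ^ 2 = (c + ((N - k : ℕ) : ℝ) * F)⁻¹ := by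
      rw [← hfk, inv_inv]
    rw [← Real.sqrt_sq hpos.le, h2, Real.sqrt_inv]
  -- sum formula for x N
  have hxNsum : -x N = ∑ j ∈ Finset.range N, (Real.sqrt (c + (j : ℝ) * F))⁻¹ := by
    have htel : ∑ i ∈ Finset.range N, (x i - x (i + 1)) = x 0 - x N :=
      Finset.sum_range_sub' x N
    have hterm : ∀ i ∈ Finset.range N,
        x i - x (i + 1) = (Real.sqrt (c + ((N - 1 - i : ℕ) : ℝ) * F))⁻¹ := by
      intro i hi
      simp only [Finset.mem_range] at hi
      have h := hδ (i + 1) (by omega) (by omega)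
      simp only [Nat.add_sub_cancel] at h
      rw [show N - (i + 1) = N - 1 - i from by omega] at h
      exact h
    calc -x N = x 0 - x N := by rw [hx0]; ring
    _ = ∑ i ∈ Finset.range N, (x i - x (i + 1)) := htel.symm
    _ = ∑ i ∈ Finset.range N, (Real.sqrt (c + ((N - 1 - i : ℕ) : ℝ) * F))⁻¹ :=
        Finset.sum_congr rfl hterm
    _ = ∑ j ∈ Finset.range N, (Real.sqrt (c + (j : ℝ) * F))⁻¹ :=
        Finset.sum_range_reflect (fun j => (Real.sqrt (c + (j : ℝ) * F))⁻¹) N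
  -- sum formula for S
  have hSsum : S = ∑ j ∈ Finset.range N, (Real.sqrt (F + (j : ℝ) * F))⁻¹ := by
    rw [hS, Finset.mul_sum, ← Finset.Ico_add_one_right_eq_Icc, Finset.sum_Ico_eq_sum_range]
    simp only [Nat.add_sub_cancel_left, Nat.succ_sub_one, Nat.add_sub_cancel]
    refine Finset.sum_congr rfl fun i _ => ?_
    have h1 : F + (i : ℝ) * F = ((1 + i : ℕ) : ℝ) * F := by push_cast; ring
    rw [h1, Real.sqrt_mul (by positivity), mul_inv, mul_comm]
  -- monotonicity
  have hle : F ≤ c →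
      ∑ j ∈ Finset.range N, (Real.sqrt (c + (j : ℝ) * F))⁻¹ ≤
      ∑ j ∈ Finset.range N, (Real.sqrt (F + (j : ℝ) * F))⁻¹ := by
    intro h
    refine Finset.sum_le_sum fun j _ => ?_
    have h0 : (0:ℝ) ≤ (j : ℝ) * F := by positivity
    have h2 : (0:ℝ) < Real.sqrt (F + (j : ℝ) * F) := Real.sqrt_pos.mpr (by positivity)
    have h3 : Real.sqrt (F + (j : ℝ) * F) ≤ Real.sqrt (c + (j : ℝ) * F) :=
      Real.sqrt_le_sqrt (by linarith)
    exact inv_anti₀ h2 h3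
  have hlt : F < c →
      ∑ j ∈ Finset.range N, (Real.sqrt (c + (j : ℝ) * F))⁻¹ <
      ∑ j ∈ Finset.range N, (Real.sqrt (F + (j : ℝ) * F))⁻¹ := by
    intro h
    refine Finset.sum_lt_sum_of_nonempty ⟨0, Finset.mem_range.mpr (by omega)⟩
      fun j _ => ?_
    have h1 : Real.sqrt (F + (j : ℝ) * F) < Real.sqrt (c + (j : ℝ) * F) := by
      apply Real.sqrt_lt_sqrt (by positivity); linarith
    have h2 : 0 < Real.sqrt (F + (j : ℝ) * F) := Real.sqrt_pos.mpr (by positivity)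
    exact inv_strictAnti₀ h2 h1
  -- main δ conclusion under c = F
  have hδF : c = F → ∀ k, 1 ≤ k → k ≤ N →
      x (k - 1) - x k = (Real.sqrt (((N : ℝ) - (k : ℝ) + 1) * F))⁻¹ := by
    intro hcF k hk1 hkN
    rw [hδ k hk1 hkN, hcF]
    congr 2
    rw [Nat.cast_sub hkN]; ring
  constructor
  · intro hSL
    have hcF : c = F := by
      rcases halt with ⟨hxN, hFc⟩ | ⟨_, hcF⟩
      · by_contra hne
        have hstrict := hlt (lt_of_le_of_ne hFc (Ne.symm hne))
        rw [← hxNsum, ← hSsum, hxN] at hstrict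
        linarith
      · exact hcF
    have hxNS : x N = -S := by
      rw [hcF] at hxNsum
      linarith [hSsum]
    refine ⟨hδF hcF, hcF, hxNS, fun h => ?_⟩
    rw [hxNS]; linarith
  · intro hLS
    rcases halt with ⟨hxN, _⟩ | ⟨hxgt, hcF⟩
    · exact hxN
    · rw [hcF] at hxNsum
      have hxNS : x N = -S := by linarith [hSsum]
      linarith
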